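/- In the converse direction of the previous statement: suppose p ∤ 2, D ∈ a⁻², and O_F ⊕ (pa)ω is an order in K with disc(ω) = −D. Choosing ξ ∈ O_F with 1 − 2ξ ∈ p and replacing ω by ω − ξ·tr(ω), one gets tr(ω) ∈ a⁻¹; then from tr(ω)² − 4N(ω) ∈ a⁻², 4N(ω) ∈ a⁻², N(ω) ∈ (pa)⁻² and p ∤ 2 it follows that N(ω) ∈ a⁻², hence O_F ⊕ aω is an order in K. -/

import Mathlib

open scoped NumberField nonZeroDivisors

/-- `disc(ω) = tr(ω)² − 4·N(ω)` for `ω` in a quadratic extension `K/F`. -/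
noncomputable def discEl (F K : Type*) [Field F] [Field K] [Algebra F K] (ω : K) : F :=
  (Algebra.trace F K ω) ^ 2 - 4 * (Algebra.norm F ω)

/-- The `𝓞 F`-submodule `O_F ⊕ aω` of `K` (as the span of `1` and `a·ω`). -/
noncomputable def pairSubmodule (F K : Type*) [Field F] [NumberField F] [Field K]
    [Algebra F K] (a : FractionalIdeal (𝓞 F)⁰ F) (ω : K) : Submodule (𝓞 F) K :=
  Submodule.span (𝓞 F)
    (insert (1 : K) ((fun b : F => algebraMap F K b * ω) '' (a : Set F)))

/-- An `𝓞 F`-submodule of `K` is an order if it contains `1`, is closed under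
multiplication, and spans `K` over `F`. -/
def IsOrderSub (F K : Type*) [Field F] [NumberField F] [Field K] [Algebra F K]
    (O : Submodule (𝓞 F) K) : Prop :=
  (1 : K) ∈ O ∧ (∀ x ∈ O, ∀ y ∈ O, x * y ∈ O) ∧ Submodule.span F (O : Set K) = ⊤

/-- `(-D, a)` is a discriminant: some `ω` with `disc(ω) = -D` makes `O_F ⊕ aω` an order. -/
def IsDiscPair (F K : Type*) [Field F] [NumberField F] [Field K] [Algebra F K]
    (D : F) (a : FractionalIdeal (𝓞 F)⁰ F) : Prop :=
  ∃ ω : K, discEl F K ω = -D ∧ IsOrderSub F K (pairSubmodule F K a ω)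

/-- A field element is totally positive if all real embeddings are positive. -/
def TotPos (F : Type*) [Field F] (D : F) : Prop := ∀ φ : F →+* ℝ, 0 < φ D

open Module

/-- Norm of `ω - c` in a quadratic extension. -/
lemma norm_sub_algebraMap (F K : Type*) [Field F] [Field K] [Algebra F K]
    [FiniteDimensional F K] [Algebra.IsSeparable F K] (h2 : finrank F K = 2) (ω : K) (c : F) :
    Algebra.norm F (ω - algebraMap F K c)
      = c ^ 2 - Algebra.trace F K ω * c + Algebra.norm F ω := by
  classical
  set E := AlgebraicClosure F
  apply (algebraMap F E).injective
  have hcard : Fintype.card (K →ₐ[F] E) = 2 := by rw [AlgHom.card, h2]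
  obtain ⟨σ, τ, hστ, huniv⟩ := Finset.card_eq_two.mp
    (by rw [Finset.card_univ]; exact hcard : (Finset.univ : Finset (K →ₐ[F] E)).card = 2)
  have hn := Algebra.norm_eq_prod_embeddings E (K := F) (ω - algebraMap F K c)
  have hn0 := Algebra.norm_eq_prod_embeddings E (K := F) ω
  have ht := trace_eq_sum_embeddings E (K := F) (x := ω)
  rw [huniv, Finset.prod_insert (by simp [hστ]), Finset.prod_singleton] at hn hn0
  rw [huniv, Finset.sum_insert (by simp [hστ]), Finset.sum_singleton] at ht
  rw [hn]
  simp only [map_add, map_sub, map_pow, map_mul, hn0, ht, AlgHom.commutes]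
  ring

/-- If `w·p² ⊆ O_F` and `4w ∈ O_F` and `2 ∉ p`, then `w ∈ O_F`. -/
lemma mem_one_of_pp_aux (F : Type*) [Field F] [NumberField F]
    (p : Ideal (𝓞 F)) (hp : p.IsPrime) (hp0 : p ≠ ⊥) (hp2 : (2 : 𝓞 F) ∉ p)
    (w : F) (hw : w ∈ (((p * p : Ideal (𝓞 F)) : FractionalIdeal (𝓞 F)⁰ F))⁻¹)
    (h4 : 4 * w ∈ (1 : FractionalIdeal (𝓞 F)⁰ F)) :
    w ∈ (1 : FractionalIdeal (𝓞 F)⁰ F) := by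
  set J : Ideal (𝓞 F) := Submodule.comap (LinearMap.toSpanSingleton (𝓞 F) F w)
    ((1 : FractionalIdeal (𝓞 F)⁰ F) : Submodule (𝓞 F) F) with hJ
  have hmemJ : ∀ r : 𝓞 F, r ∈ J ↔ algebraMap (𝓞 F) F r * w ∈ (1 : FractionalIdeal (𝓞 F)⁰ F) := by
    intro r
    rw [hJ, Submodule.mem_comap, LinearMap.toSpanSingleton_apply, Algebra.smul_def,
      FractionalIdeal.mem_coe]
  have hppne : ((p * p : Ideal (𝓞 F)) : FractionalIdeal (𝓞 F)⁰ F) ≠ 0 :=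
    FractionalIdeal.coeIdeal_ne_zero.mpr
      (fun h => by rcases Ideal.mul_eq_bot.mp h with h | h <;> exact hp0 h)
  have hpp : p * p ≤ J := by
    intro r hr
    rw [hmemJ]
    rw [mul_comm]
    exact (FractionalIdeal.mem_inv_iff hppne).mp hw _ (FractionalIdeal.mem_coeIdeal_of_mem _ hr)
  have h4J : (4 : 𝓞 F) ∈ J := by
    rw [hmemJ]
    have h4' : algebraMap (𝓞 F) F 4 = 4 := map_ofNat _ 4
    rw [h4']; exact h4
  have hJtop : J = ⊤ := by
    by_contra hne
    obtain ⟨m, hm, hJm⟩ := Ideal.exists_le_maximal J hne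
    have hpm : p ≤ m := by
      rcases (Ideal.IsPrime.mul_le hm.isPrime).mp (le_trans hpp hJm) with h | h <;> exact h
    have hpmax : p.IsMaximal := hp.isMaximal hp0
    have : p = m := hpmax.eq_of_le hm.ne_top hpm
    have h4p : (4 : 𝓞 F) ∈ p := this ▸ (hpm.antisymm (le_of_eq this.symm) ▸ hJm h4J)
    have : (2 : 𝓞 F) * 2 ∈ p := by
      have : (4 : 𝓞 F) = 2 * 2 := by norm_num
      rwa [this] at h4p
    rcases hp.mem_or_mem this with h | h <;> exact hp2 h
  have : (1 : 𝓞 F) ∈ J := hJtop ▸ Submodule.mem_top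
  rw [hmemJ] at this
  simpa using this

/-- Detailed converse direction: if `p ∤ 2`, `D ∈ a⁻²` and
`O_F ⊕ (pa)ω` is an order with `disc(ω) = −D` (so that `tr(ω) ∈ (pa)⁻¹` and
`N(ω) ∈ (pa)⁻²`), then choosing `ξ ∈ O_F` with `1 − 2ξ ∈ p` and replacing `ω` by
`ω − ξ·tr(ω)` one obtains `tr ∈ a⁻¹`, `N ∈ a⁻²`, hence `O_F ⊕ aω'` is an order.
The sufficiency criterion "`tr ∈ b⁻¹` and `N ∈ b⁻²` imply `O_F ⊕ bω` is an order"
is supplied as the hypothesis `hcrit`. -/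
theorem discriminant_pair_descends
    (F K : Type*) [Field F] [NumberField F] [Field K] [NumberField K] [Algebra F K]
    (hrank : Module.finrank F K = 2)
    (D : F) (a : FractionalIdeal (𝓞 F)⁰ F)
    (p : Ideal (𝓞 F)) (hp : p.IsPrime) (hp0 : p ≠ ⊥)
    (hp2 : (2 : 𝓞 F) ∉ p)
    (hDa : D ∈ (a⁻¹ * a⁻¹ : FractionalIdeal (𝓞 F)⁰ F))
    (hcrit : ∀ (b : FractionalIdeal (𝓞 F)⁰ F) (ω0 : K),
      Algebra.trace F K ω0 ∈ (b⁻¹ : FractionalIdeal (𝓞 F)⁰ F) →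
      Algebra.norm F ω0 ∈ (b⁻¹ * b⁻¹ : FractionalIdeal (𝓞 F)⁰ F) →
      IsOrderSub F K (pairSubmodule F K b ω0))
    (ω : K) (hdiscω : discEl F K ω = -D)
    (hord : IsOrderSub F K
      (pairSubmodule F K ((p : FractionalIdeal (𝓞 F)⁰ F) * a) ω))
    (htr : Algebra.trace F K ω ∈
      (((p : FractionalIdeal (𝓞 F)⁰ F) * a)⁻¹ : FractionalIdeal (𝓞 F)⁰ F))
    (hnm : Algebra.norm F ω ∈
      ((((p : FractionalIdeal (𝓞 F)⁰ F) * a)⁻¹) * (((p : FractionalIdeal (𝓞 F)⁰ F) * a)⁻¹)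
        : FractionalIdeal (𝓞 F)⁰ F)) :
    ∃ ξ : 𝓞 F, (1 - 2 * ξ) ∈ p ∧
      (let ω' : K := ω - algebraMap F K (algebraMap (𝓞 F) F ξ * Algebra.trace F K ω)
       discEl F K ω' = -D ∧
       Algebra.trace F K ω' ∈ (a⁻¹ : FractionalIdeal (𝓞 F)⁰ F) ∧
       Algebra.norm F ω' ∈ (a⁻¹ * a⁻¹ : FractionalIdeal (𝓞 F)⁰ F) ∧
       IsOrderSub F K (pairSubmodule F K a ω')) := by
  haveI : FiniteDimensional F K := FiniteDimensional.right ℚ F K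
  -- construct ξ
  haveI hpmax : p.IsMaximal := hp.isMaximal hp0
  obtain ⟨ξ, i, hi, hξi⟩ := hpmax.exists_inv hp2
  have hmem : (1 - 2 * ξ) ∈ p := by
    have : 1 - 2 * ξ = i := by linear_combination -hξi
    rwa [this]
  refine ⟨ξ, hmem, ?_⟩
  set t := Algebra.trace F K ω with ht_def
  set n := Algebra.norm F ω with hn_def
  set ξF := algebraMap (𝓞 F) F ξ with hξF_def
  set c := ξF * t with hc_def
  show discEl F K (ω - algebraMap F K c) = -D ∧ _
  set ω' := ω - algebraMap F K c with hω'_def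
  have htr' : Algebra.trace F K ω' = t - 2 * c := by
    rw [hω'_def, map_sub, Algebra.trace_algebraMap, hrank, ← ht_def]
    norm_num
  have hnm' : Algebra.norm F ω' = c ^ 2 - t * c + n := by
    rw [hω'_def, norm_sub_algebraMap F K hrank ω c, ← ht_def, ← hn_def]
  have hdisc0 : t ^ 2 - 4 * n = -D := hdiscω
  have hdisc' : discEl F K ω' = -D := by
    rw [discEl, htr', hnm', ← hdisc0]; ring
  set P : FractionalIdeal (𝓞 F)⁰ F := (p : FractionalIdeal (𝓞 F)⁰ F) with hP_def
  by_cases hA : a = 0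
  · -- degenerate case
    subst hA
    have ht0 : t = 0 := by
      simpa [FractionalIdeal.mem_zero_iff] using htr
    have hn0' : n = 0 := by
      simpa [FractionalIdeal.mem_zero_iff] using hnm
    have htr0 : Algebra.trace F K ω' = 0 := by rw [htr', ht0, hc_def, ht0]; ring
    have hnm0 : Algebra.norm F ω' = 0 := by rw [hnm', ht0, hn0', hc_def, ht0]; ring
    refine ⟨hdisc', ?_, ?_, ?_⟩
    · simp [FractionalIdeal.mem_zero_iff, htr0]
    · simp [FractionalIdeal.mem_zero_iff, hnm0]
    · exact hcrit 0 ω' (by simp [FractionalIdeal.mem_zero_iff, htr0])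
        (by simp [FractionalIdeal.mem_zero_iff, hnm0])
  · have hPne : P ≠ 0 := FractionalIdeal.coeIdeal_ne_zero.mpr hp0
    have hQne : P * a ≠ 0 := mul_ne_zero hPne hA
    -- trace membership
    have h1mem : algebraMap (𝓞 F) F (1 - 2 * ξ) ∈ P :=
      FractionalIdeal.mem_coeIdeal_of_mem _ hmem
    have htreq : Algebra.trace F K ω' = algebraMap (𝓞 F) F (1 - 2 * ξ) * t := by
      rw [htr', hc_def, hξF_def, map_sub, map_mul, map_one, map_ofNat]
      ring
    have htrmem : Algebra.trace F K ω' ∈ (a⁻¹ : FractionalIdeal (𝓞 F)⁰ F) := by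
      have hmul := FractionalIdeal.mul_mem_mul h1mem htr
      rw [← htreq] at hmul
      have hPeq : P * (P * a)⁻¹ = a⁻¹ := by
        rw [mul_inv, ← mul_assoc, mul_inv_cancel₀ hPne, one_mul]
      rwa [hPeq] at hmul
    -- norm membership in Q⁻²
    have ht2 : t * t ∈ (P * a)⁻¹ * (P * a)⁻¹ := FractionalIdeal.mul_mem_mul htr htr
    have hnmQ : Algebra.norm F ω' ∈ (P * a)⁻¹ * (P * a)⁻¹ := by
      have heq : Algebra.norm F ω' = ξ • (ξ • (t * t)) - ξ • (t * t) + n := by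
        rw [hnm', hc_def]
        simp only [Algebra.smul_def, ← hξF_def]
        ring
      rw [← FractionalIdeal.mem_coe, heq]
      refine Submodule.add_mem _ (Submodule.sub_mem _
        (Submodule.smul_mem _ _ (Submodule.smul_mem _ _ ?_)) (Submodule.smul_mem _ _ ?_)) ?_
      · exact FractionalIdeal.mem_coe.mpr ht2
      · exact FractionalIdeal.mem_coe.mpr ht2
      · exact FractionalIdeal.mem_coe.mpr hnm
    -- 4·N(ω') ∈ a⁻²
    have h4nm : 4 * Algebra.norm F ω' ∈ (a⁻¹ * a⁻¹ : FractionalIdeal (𝓞 F)⁰ F) := by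
      have h4eq : 4 * Algebra.norm F ω' = Algebra.trace F K ω' * Algebra.trace F K ω' + D := by
        have := hdisc'
        rw [discEl] at this
        linear_combination (-1 : F) * this
      rw [h4eq]
      exact Submodule.add_mem _ (FractionalIdeal.mul_mem_mul htrmem htrmem) hDa
    -- conclude N(ω') ∈ a⁻²
    have hAAne : a * a ≠ 0 := mul_ne_zero hA hA
    have hnmA : Algebra.norm F ω' ∈ (a⁻¹ * a⁻¹ : FractionalIdeal (𝓞 F)⁰ F) := by
      rw [← mul_inv, FractionalIdeal.mem_inv_iff hAAne]
      intro y hy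
      -- 4 * (N' * y) ∈ 1
      have h4wy : 4 * (Algebra.norm F ω' * y) ∈ (1 : FractionalIdeal (𝓞 F)⁰ F) := by
        have := FractionalIdeal.mul_mem_mul h4nm hy
        have he : (a⁻¹ * a⁻¹ : FractionalIdeal (𝓞 F)⁰ F) * (a * a) = 1 := by
          rw [show (a⁻¹ * a⁻¹ : FractionalIdeal (𝓞 F)⁰ F) * (a * a)
              = (a⁻¹ * a) * (a⁻¹ * a) from by ring, inv_mul_cancel₀ hA, one_mul]
        rw [he] at this
        rwa [show 4 * (Algebra.norm F ω' * y) = 4 * Algebra.norm F ω' * y from by ring]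
      -- N' * y ∈ (p*p)⁻¹
      have hwpp : Algebra.norm F ω' * y ∈
          (((p * p : Ideal (𝓞 F)) : FractionalIdeal (𝓞 F)⁰ F))⁻¹ := by
        have := FractionalIdeal.mul_mem_mul hnmQ hy
        have he : ((P * a)⁻¹ * (P * a)⁻¹ : FractionalIdeal (𝓞 F)⁰ F) * (a * a)
            = (P * P)⁻¹ := by
          rw [mul_inv, show (P⁻¹ * a⁻¹ * (P⁻¹ * a⁻¹) : FractionalIdeal (𝓞 F)⁰ F) * (a * a)
              = (P⁻¹ * P⁻¹) * ((a⁻¹ * a) * (a⁻¹ * a)) from by ring,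
            inv_mul_cancel₀ hA, one_mul, mul_one, ← mul_inv]
        rw [he] at this
        rwa [FractionalIdeal.coeIdeal_mul, ← hP_def]
      exact mem_one_of_pp_aux F p hp hp0 hp2 _ hwpp h4wy
    exact ⟨hdisc', htrmem, hnmA, hcrit a ω' htrmem hnmA⟩
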